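/- Let G be a Frobenius group with abelian Frobenius kernel K and let χ be a nonprincipal irreducible character of K. Then the induced character χ^G is irreducible of degree [G : K]. -/

import Mathlib

open CategoryTheory

/-- `G` is a Frobenius group with kernel `K` and complement `H`: `K` is a nontrivial
normal subgroup, `H` a nontrivial complement, and every nontrivial element of `H` fixes
only the identity of `K` under conjugation. -/
def IsFrobeniusWith (G : Type) [Group G] (K H : Subgroup G) : Prop :=
  K.Normal ∧ Subgroup.IsComplement' K H ∧ K ≠ ⊥ ∧ H ≠ ⊥ ∧
    ∀ h ∈ H, h ≠ 1 → ∀ k ∈ K, h * k * h⁻¹ = k → k = 1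

open scoped Classical in
/-- The character of `G` induced from the class function `f` on the subgroup `K`. -/
noncomputable def indChar {G : Type} [Group G] [Fintype G] (K : Subgroup G)
    (f : K → ℂ) (g : G) : ℂ :=
  (Nat.card K : ℂ)⁻¹ * ∑ x : G, if h : x⁻¹ * g * x ∈ K then f ⟨x⁻¹ * g * x, h⟩ else 0

namespace FrobAux

open scoped Classical

variable {G : Type} [Group G] (K : Subgroup G) [hN : K.Normal]

/-- Conjugation by `t` as a monoid hom `K →* K`. -/
def conjK (t : G) : K →* K where
  toFun k := ⟨t * k * t⁻¹, hN.conj_mem k.1 k.2 t⟩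
  map_one' := by ext; simp
  map_mul' a b := by ext; simp only [Subgroup.coe_mul]; group

@[simp] lemma conjK_coe (t : G) (k : K) : (conjK K t k : G) = t * k * t⁻¹ := rfl

lemma conjK_mul (a b : G) (k : K) : conjK K (a * b) k = conjK K a (conjK K b k) := by
  ext; simp only [conjK_coe]; group

lemma conjK_conjK_inv (a : G) (k : K) : conjK K a (conjK K a⁻¹ k) = k := by
  ext; simp only [conjK_coe]; group

lemma conjK_mem (k₀ : K) (hab : ∀ a b : K, a * b = b * a) (m : K) :
    conjK K (k₀ : G) m = m := by
  ext
  have h : (k₀ : G) * m = m * k₀ := by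
    have := hab k₀ m
    exact_mod_cast congrArg (Subtype.val) this
  simp only [conjK_coe]
  rw [h, mul_assoc, mul_inv_cancel, mul_one]

lemma kap_mem (g : G) (c : G ⧸ K) : c.out * g * ((c * (g : G ⧸ K)).out)⁻¹ ∈ K := by
  have h1 : ((c.out * g : G) : G ⧸ K) = ((c * (g : G ⧸ K)).out : G ⧸ K) := by
    rw [QuotientGroup.out_eq', QuotientGroup.mk_mul, QuotientGroup.out_eq']
  have h2 : (c.out * g)⁻¹ * (c * (g : G ⧸ K)).out ∈ K := QuotientGroup.eq.mp h1
  have h3 := hN.conj_mem _ (K.inv_mem h2) (c.out * g)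
  convert h3 using 1
  group

/-- The `K`-valued cocycle of the induced representation. -/
noncomputable def kap (g : G) (c : G ⧸ K) : K :=
  ⟨c.out * g * ((c * (g : G ⧸ K)).out)⁻¹, kap_mem K g c⟩

@[simp] lemma kap_coe (g : G) (c : G ⧸ K) :
    (kap K g c : G) = c.out * g * ((c * (g : G ⧸ K)).out)⁻¹ := rfl

lemma kap_one (c : G ⧸ K) : kap K 1 c = 1 := by
  ext; simp [kap]

lemma kap_mul (g₁ g₂ : G) (c : G ⧸ K) :
    kap K (g₁ * g₂) c = kap K g₁ c * kap K g₂ (c * (g₁ : G ⧸ K)) := by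
  ext
  simp only [Subgroup.coe_mul, kap_coe, QuotientGroup.mk_mul, ← mul_assoc]
  group

lemma kap_of_mem (g : G) (hg : g ∈ K) (c : G ⧸ K) :
    kap K g c = conjK K c.out ⟨g, hg⟩ := by
  have h1 : ((g : G) : G ⧸ K) = 1 := (QuotientGroup.eq_one_iff g).mpr hg
  ext
  simp [kap, conjK, h1]

variable (χ : K →* ℂˣ)

/-- The induced representation on `(G ⧸ K) → ℂ`. -/
noncomputable def rho : Representation ℂ G ((G ⧸ K) → ℂ) where
  toFun g :=
    { toFun := fun f c => (χ (kap K g c) : ℂ) * f (c * (g : G ⧸ K))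
      map_add' := fun f₁ f₂ => funext fun c => by simp [mul_add]
      map_smul' := fun r f => funext fun c => by
        simp only [Pi.smul_apply, smul_eq_mul, RingHom.id_apply]; ring }
  map_one' := by
    apply LinearMap.ext; intro f; funext c
    simp [kap_one]
  map_mul' g₁ g₂ := by
    apply LinearMap.ext; intro f; funext c
    simp only [LinearMap.coe_mk, AddHom.coe_mk, Module.End.mul_apply, kap_mul, map_mul,
      Units.val_mul, QuotientGroup.mk_mul, mul_assoc]

lemma rho_apply (g : G) (f : (G ⧸ K) → ℂ) (c : G ⧸ K) :
    rho K χ g f c = (χ (kap K g c) : ℂ) * f (c * (g : G ⧸ K)) := rfl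

section Frobenius

variable {K} {H : Subgroup G}

/-- If a nontrivial character of the abelian kernel is fixed by conjugation by `t`,
then `t` lies in the kernel. -/
lemma inertia [Finite G] (hFrob : IsFrobeniusWith G K H)
    (hab : ∀ a b : K, a * b = b * a)
    (χ' : K →* ℂˣ) (hχ' : χ' ≠ 1) (t : G)
    (ht : ∀ k : K, χ' (conjK K t k) = χ' k) : t ∈ K := by
  obtain ⟨⟨k₀, h⟩, he, -⟩ := hFrob.2.1.existsUnique t
  simp only at he
  by_cases hne : (h : G) = 1
  · rw [← he, hne, mul_one]; exact k₀.2
  · exfalso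
    have key : ∀ k : K, χ' (conjK K (h : G) k) = χ' k := by
      intro k
      have h1 := ht k
      rw [← he, conjK_mul, conjK_mem K k₀ hab] at h1
      exact h1
    letI : CommGroup K := { (inferInstance : Group K) with mul_comm := hab }
    let φ : K →* K := MonoidHom.mk' (fun k => conjK K (h : G) k * k⁻¹) (by
      intro a b
      simp only [map_mul, mul_inv_rev]
      rw [mul_comm b⁻¹ a⁻¹, mul_mul_mul_comm])
    have hφinj : Function.Injective φ := by
      refine (injective_iff_map_eq_one φ).mpr fun k hk => ?_
      have h2 : conjK K (h : G) k = k := by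
        have := mul_inv_eq_one.mp hk
        exact this
      have h3 : (h : G) * k * (h : G)⁻¹ = k := congrArg Subtype.val h2
      have h4 : (k : G) = 1 := hFrob.2.2.2.2 h h.2 hne k k.2 h3
      exact Subtype.ext h4
    have hφsurj : Function.Surjective φ := Finite.injective_iff_surjective.mp hφinj
    apply hχ'
    ext m
    obtain ⟨k, hk⟩ := hφsurj m
    have : χ' (φ k) = 1 := by
      simp only [φ, MonoidHom.mk'_apply, map_mul, map_inv, key k, mul_inv_cancel]
    rw [hk] at this
    simp [this]

/-- Distinct cosets give distinct conjugate characters. -/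
lemma psi_inj [Finite G] (hFrob : IsFrobeniusWith G K H)
    (hab : ∀ a b : K, a * b = b * a) (hχ : χ ≠ 1) {c c' : G ⧸ K}
    (hcc : ∀ k : K, χ (conjK K c.out k) = χ (conjK K c'.out k)) : c = c' := by
  set u := c'.out
  set v := c.out
  have hsurj : Function.Surjective (conjK K u) := fun m => ⟨conjK K u⁻¹ m, conjK_conjK_inv K u m⟩
  have hχ₂ : χ.comp (conjK K u) ≠ 1 := by
    intro h0
    apply hχ
    ext m
    obtain ⟨k, hk⟩ := hsurj m
    have := congrArg (fun ψ => ψ k) h0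
    simp only [MonoidHom.comp_apply, MonoidHom.one_apply] at this
    rw [← hk]; simpa using this
  have ht : ∀ k : K, (χ.comp (conjK K u)) (conjK K (u⁻¹ * v) k) = (χ.comp (conjK K u)) k := by
    intro k
    simp only [MonoidHom.comp_apply]
    rw [← conjK_mul, mul_inv_cancel_left]
    exact hcc k
  have htK : u⁻¹ * v ∈ K := inertia hFrob hab (χ.comp (conjK K u)) hχ₂ (u⁻¹ * v) ht
  have : (u : G ⧸ K) = (v : G ⧸ K) := QuotientGroup.eq.mpr htK
  rw [QuotientGroup.out_eq', QuotientGroup.out_eq'] at this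
  exact this.symm

end Frobenius

/-- The sum of a nontrivial character over a finite group vanishes. -/
lemma sum_char_eq_zero [Fintype K] (θ : K →* ℂˣ) (hθ : θ ≠ 1) :
    ∑ k : K, (θ k : ℂ) = 0 := by
  have : ¬∀ k : K, θ k = 1 := fun h => hθ (MonoidHom.ext fun k => h k)
  push_neg at this
  obtain ⟨k₁, hk₁⟩ := this
  have hmul : (θ k₁ : ℂ) * ∑ k : K, (θ k : ℂ) = ∑ k : K, (θ k : ℂ) := by
    rw [Finset.mul_sum]
    exact Fintype.sum_equiv (Equiv.mulLeft k₁) _ _ fun k => by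
      simp [← Units.val_mul, ← map_mul]
  have hz : ((θ k₁ : ℂ) - 1) * ∑ k : K, (θ k : ℂ) = 0 := by
    rw [sub_mul, one_mul, hmul, sub_self]
  rcases mul_eq_zero.mp hz with h | h
  · exfalso
    apply hk₁
    have : (θ k₁ : ℂ) = 1 := by linear_combination h
    exact Units.ext this
  · exact h

variable {K χ}

/-- The key irreducibility statement: every invariant subspace is trivial. -/
lemma submodule_eq_top [Fintype G] {H : Subgroup G}
    (hFrob : IsFrobeniusWith G K H) (hab : ∀ a b : K, a * b = b * a) (hχ : χ ≠ 1)
    (W : Submodule ℂ ((G ⧸ K) → ℂ))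
    (hW : ∀ (g : G) (f : (G ⧸ K) → ℂ), f ∈ W → rho K χ g f ∈ W)
    (hne : W ≠ ⊥) : W = ⊤ := by
  haveI : Fintype K := Fintype.ofFinite _
  obtain ⟨f₀, hf₀W, hf₀ne⟩ := Submodule.exists_mem_ne_zero_of_ne_bot hne
  obtain ⟨c₀, hc₀⟩ : ∃ c₀, f₀ c₀ ≠ 0 := by
    by_contra h
    push_neg at h
    exact hf₀ne (funext h)
  -- the averaged projection onto the `c₀` eigenline
  set s : (G ⧸ K) → ℂ :=
    ∑ k : K, ((χ (conjK K c₀.out k) : ℂ))⁻¹ • rho K χ (k : G) f₀ with hs_def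
  have hsW : s ∈ W := Submodule.sum_mem W fun k _ => Submodule.smul_mem W _ (hW _ _ hf₀W)
  have hcoset1 : ∀ k : K, ((k : G) : G ⧸ K) = 1 := fun k =>
    (QuotientGroup.eq_one_iff (k : G)).mpr k.2
  have hterm : ∀ (k : K) (c : G ⧸ K),
      rho K χ (k : G) f₀ c = (χ (conjK K c.out k) : ℂ) * f₀ c := by
    intro k c
    rw [rho_apply, kap_of_mem K (k : G) k.2 c, hcoset1 k, mul_one]
  have hs : ∀ c, s c = if c = c₀ then (Nat.card K : ℂ) * f₀ c₀ else 0 := by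
    intro c
    have hsc : s c = ∑ k : K,
        ((χ (conjK K c₀.out k) : ℂ))⁻¹ * ((χ (conjK K c.out k) : ℂ) * f₀ c) := by
      rw [hs_def]
      simp only [Finset.sum_apply, Pi.smul_apply, smul_eq_mul]
      exact Finset.sum_congr rfl fun k _ => by rw [hterm k c]
    by_cases hcc : c = c₀
    · subst hcc
      rw [hsc]
      have : ∀ k : K, ((χ (conjK K c.out k) : ℂ))⁻¹ * ((χ (conjK K c.out k) : ℂ) * f₀ c)
          = f₀ c := fun k => by
        rw [← mul_assoc, inv_mul_cancel₀ (Units.ne_zero _), one_mul]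
      rw [Finset.sum_congr rfl fun k _ => this k, Finset.sum_const, Finset.card_univ,
        Nat.card_eq_fintype_card, if_pos rfl, nsmul_eq_mul]
    · rw [hsc, if_neg hcc]
      set θ : K →* ℂˣ := (χ.comp (conjK K c.out)) * (χ.comp (conjK K c₀.out))⁻¹ with hθdef
      have hθne : θ ≠ 1 := by
        intro h0
        apply hcc
        refine psi_inj χ hFrob hab hχ fun k => ?_
        have := congrArg (fun ψ => ψ k) h0
        simp only [hθdef, MonoidHom.mul_apply, MonoidHom.inv_apply, MonoidHom.comp_apply,
          MonoidHom.one_apply] at this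
        exact mul_inv_eq_one.mp this
      have hθsum : ∑ k : K, (θ k : ℂ) = 0 := sum_char_eq_zero K θ hθne
      have : ∀ k : K, ((χ (conjK K c₀.out k) : ℂ))⁻¹ * ((χ (conjK K c.out k) : ℂ) * f₀ c)
          = (θ k : ℂ) * f₀ c := fun k => by
        simp only [hθdef, MonoidHom.mul_apply, MonoidHom.inv_apply, MonoidHom.comp_apply,
          Units.val_mul]
        rw [← Units.val_inv_eq_inv_val]
        ring
      rw [Finset.sum_congr rfl fun k _ => this k, ← Finset.sum_mul, hθsum, zero_mul]
  have hcard : (Nat.card K : ℂ) ≠ 0 := by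
    simp [Nat.card_eq_fintype_card, Fintype.card_ne_zero]
  have hδ : Pi.single c₀ (1 : ℂ) ∈ W := by
    have heq : Pi.single c₀ (1 : ℂ) = ((Nat.card K : ℂ) * f₀ c₀)⁻¹ • s := by
      funext c
      rw [Pi.smul_apply, smul_eq_mul, hs c, Pi.single_apply]
      by_cases hcc : c = c₀
      · rw [if_pos hcc, if_pos hcc, inv_mul_cancel₀ (mul_ne_zero hcard hc₀)]
      · rw [if_neg hcc, if_neg hcc, mul_zero]
    rw [heq]
    exact Submodule.smul_mem W _ hsW
  have hall : ∀ c : G ⧸ K, Pi.single c (1 : ℂ) ∈ W := by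
    intro c
    set g : G := (c⁻¹ * c₀).out with hgdef
    have hg : (g : G ⧸ K) = c⁻¹ * c₀ := QuotientGroup.out_eq' _
    have hrg : rho K χ g (Pi.single c₀ (1 : ℂ)) = (χ (kap K g c) : ℂ) • (Pi.single c (1 : ℂ) : (G ⧸ K) → ℂ) := by
      funext c'
      rw [rho_apply, hg, Pi.smul_apply, smul_eq_mul]
      by_cases hcc : c' = c
      · subst hcc
        rw [Pi.single_apply, Pi.single_apply, if_pos (by group), if_pos rfl]
      · rw [Pi.single_apply, Pi.single_apply, if_neg (by
          intro h0
          apply hcc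
          have : c' * (c⁻¹ * c₀) * (c⁻¹ * c₀)⁻¹ = c₀ * (c⁻¹ * c₀)⁻¹ := by rw [h0]
          simpa [mul_assoc] using this.trans (by group)), if_neg hcc, mul_zero, mul_zero]
    have : Pi.single c (1 : ℂ) = ((χ (kap K g c) : ℂ))⁻¹ • rho K χ g (Pi.single c₀ (1 : ℂ)) := by
      rw [hrg, smul_smul, inv_mul_cancel₀ (Units.ne_zero _), one_smul]
    rw [this]
    exact Submodule.smul_mem W _ (hW _ _ hδ)
  rw [Submodule.eq_top_iff']
  intro f
  have hf : f = ∑ c : G ⧸ K, Pi.single c (f c) := (Finset.univ_sum_single f).symm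
  rw [hf]
  refine Submodule.sum_mem W fun c _ => ?_
  have : Pi.single c (f c) = (f c) • (Pi.single c (1 : ℂ) : (G ⧸ K) → ℂ) := by
    funext c'
    rw [Pi.smul_apply, smul_eq_mul, Pi.single_apply, Pi.single_apply]
    by_cases hcc : c' = c
    · rw [if_pos hcc, if_pos hcc, mul_one]
    · rw [if_neg hcc, if_neg hcc, mul_zero]
  rw [this]
  exact Submodule.smul_mem W _ (hall c)

end FrobAux

open FrobAux

/-- Let `G` be a Frobenius group with abelian kernel `K`, and let `χ` be a nonprincipal
irreducible (i.e. nontrivial linear) character of `K`. Then the induced character `χ^G`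
is irreducible of degree `[G : K]`. -/
theorem induced_char_irreducible_of_frobenius
    (G : Type) [Group G] [Fintype G] (K H : Subgroup G)
    (hFrob : IsFrobeniusWith G K H) (hab : ∀ a b : K, a * b = b * a)
    (χ : K →* ℂˣ) (hχ : χ ≠ 1) :
    ∃ V : FDRep ℂ G, Simple V ∧
      (∀ g : G, V.character g = indChar K (fun k => (χ k : ℂ)) g) ∧
      Module.finrank ℂ V = K.index := by
  classical
  haveI hN := hFrob.1
  haveI : Fintype (G ⧸ K) := Fintype.ofFinite _
  haveI : Fintype K := Fintype.ofFinite _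
  refine ⟨FDRep.of (rho K χ), ?_, ?_, ?_⟩
  · -- Simple
    constructor
    intro Y f hm
    constructor
    · -- IsIso → f ≠ 0
      intro hiso hf0
      have h1 : 𝟙 (FDRep.of (rho K χ)) = 0 := by
        have h := congrArg (fun φ => inv f ≫ φ) hf0
        simp only [Limits.comp_zero] at h
        rw [← IsIso.inv_hom_id f]
        exact h
      have h2 := congrArg (fun φ => Action.Hom.hom φ) h1
      simp only [Action.id_hom, Action.zero_hom] at h2
      have h2' : (LinearMap.id : ((G ⧸ K) → ℂ) →ₗ[ℂ] ((G ⧸ K) → ℂ)) = 0 := by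
        have := congrArg (fun φ => φ.hom.hom) h2; exact this
      have h3 := congrArg (fun (l : ((G ⧸ K) → ℂ) →ₗ[ℂ] ((G ⧸ K) → ℂ)) =>
        l (Pi.single (1 : G ⧸ K) (1 : ℂ)) (1 : G ⧸ K)) h2'
      simp only [LinearMap.id_apply, LinearMap.zero_apply, Pi.zero_apply,
        Pi.single_eq_same] at h3
      exact one_ne_zero h3
    · -- f ≠ 0 → IsIso
      intro hf0
      let F : Y.V →ₗ[ℂ] ((G ⧸ K) → ℂ) := f.hom.hom.hom
      have hcomm : ∀ (g : G) (v : Y.V), F (Y.ρ g v) = rho K χ g (F v) := by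
        intro g v
        have := congrArg (fun (l : Y.V ⟶ (FDRep.of (rho K χ)).V) => l.hom.hom v) (f.comm g)
        exact this
      -- surjectivity
      have hsurj : Function.Surjective F := by
        rw [← LinearMap.range_eq_top]
        refine submodule_eq_top hFrob hab hχ (LinearMap.range F) ?_ ?_
        · rintro g w ⟨v, rfl⟩
          exact ⟨Y.ρ g v, hcomm g v⟩
        · intro h0
          apply hf0
          ext v
          have hF0 : F = 0 := LinearMap.range_eq_bot.mp h0
          have := congrArg (fun (l : Y.V →ₗ[ℂ] ((G ⧸ K) → ℂ)) => l v) hF0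
          exact congrFun this _
      -- injectivity via the kernel subrepresentation and Mono f
      have hinj : Function.Injective F := by
        rw [← LinearMap.ker_eq_bot]
        by_contra hker
        obtain ⟨v₀, hv₀mem, hv₀ne⟩ := Submodule.exists_mem_ne_zero_of_ne_bot hker
        set N := LinearMap.ker F with hNdef
        have hNinv : ∀ (g : G) (v : Y.V), v ∈ N → Y.ρ g v ∈ N := by
          intro g v hv
          have hv' : F v = 0 := hv
          show F (Y.ρ g v) = 0
          rw [hcomm g v, hv', map_zero]
        let ρN : Representation ℂ G N :=
          { toFun := fun g => (Y.ρ g).restrict (fun v hv => hNinv g v hv)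
            map_one' := by
              apply LinearMap.ext; intro x
              apply Subtype.ext
              show Y.ρ 1 (N.subtype x) = N.subtype x
              rw [map_one, Module.End.one_apply]
            map_mul' := fun g₁ g₂ => by
              apply LinearMap.ext; intro x
              apply Subtype.ext
              show Y.ρ (g₁ * g₂) (N.subtype x) = Y.ρ g₁ (Y.ρ g₂ (N.subtype x))
              rw [map_mul, Module.End.mul_apply] }
        let ι : FDRep.of ρN ⟶ Y :=
          { hom := ObjectProperty.homMk (ModuleCat.ofHom N.subtype)
            comm := fun g => by
              apply FGModuleCat.hom_ext
              apply LinearMap.ext; intro x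
              show N.subtype ((Y.ρ g).restrict (hNinv g) x) = Y.ρ g (N.subtype x)
              simp [LinearMap.restrict_apply] }
        have hcompzero : ι ≫ f = 0 := by
          apply Action.hom_ext
          rw [Action.comp_hom, Action.zero_hom]
          apply FGModuleCat.hom_ext
          apply LinearMap.ext
          rintro ⟨v, hv⟩
          exact hv
        have hι0 : ι = 0 := hm.right_cancellation ι 0 (by
          rw [hcompzero, Limits.zero_comp])
        have h4 := congrArg (fun φ => Action.Hom.hom φ) hι0
        simp only [Action.zero_hom] at h4
        have h4' : (N.subtype : N →ₗ[ℂ] Y.V) = 0 := by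
          have := congrArg (fun φ => φ.hom.hom) h4; exact this
        have h5 := congrArg (fun (l : N →ₗ[ℂ] Y.V) => l ⟨v₀, hv₀mem⟩) h4'
        simp only [Submodule.subtype_apply, LinearMap.zero_apply] at h5
        exact hv₀ne h5
      -- build the inverse
      let e : Y.V ≃ₗ[ℂ] ((G ⧸ K) → ℂ) := LinearEquiv.ofBijective F ⟨hinj, hsurj⟩
      let ginv : FDRep.of (rho K χ) ⟶ Y :=
        { hom := ObjectProperty.homMk (ModuleCat.ofHom (e.symm : ((G ⧸ K) → ℂ) →ₗ[ℂ] Y.V))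
          comm := fun g => by
            apply FGModuleCat.hom_ext
            apply LinearMap.ext; intro w
            show e.symm (rho K χ g w) = Y.ρ g (e.symm w)
            apply hinj
            show F (e.symm (rho K χ g w)) = F (Y.ρ g (e.symm w))
            rw [hcomm g (e.symm w)]
            have h1 : F (e.symm (rho K χ g w)) = rho K χ g w := e.apply_symm_apply _
            have h2 : F (e.symm w) = w := e.apply_symm_apply _
            rw [h1, h2] }
      refine ⟨⟨ginv, ?_, ?_⟩⟩
      · apply Action.hom_ext
        apply FGModuleCat.hom_ext
        apply LinearMap.ext; intro v
        show e.symm (F v) = v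
        exact e.symm_apply_apply v
      · apply Action.hom_ext
        apply FGModuleCat.hom_ext
        apply LinearMap.ext; intro w
        show F (e.symm w) = w
        exact e.apply_symm_apply w
  · -- character
    intro g
    have htrace : LinearMap.trace ℂ ((G ⧸ K) → ℂ) (rho K χ g)
        = if g ∈ K then ∑ c : G ⧸ K, (χ (kap K g c) : ℂ) else 0 := by
      rw [LinearMap.trace_eq_matrix_trace ℂ (Pi.basisFun ℂ (G ⧸ K)), Matrix.trace]
      have hdiag : ∀ c : G ⧸ K,
          (LinearMap.toMatrix (Pi.basisFun ℂ (G ⧸ K)) (Pi.basisFun ℂ (G ⧸ K)) (rho K χ g)).diag c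
            = if g ∈ K then (χ (kap K g c) : ℂ) else 0 := by
        intro c
        rw [Matrix.diag_apply, LinearMap.toMatrix_apply, Pi.basisFun_repr, Pi.basisFun_apply]
        rw [rho_apply]
        by_cases hg : g ∈ K
        · rw [if_pos hg]
          have h1 : ((g : G) : G ⧸ K) = 1 := (QuotientGroup.eq_one_iff g).mpr hg
          rw [h1, mul_one]
          simp
        · rw [if_neg hg]
          have h1 : c * (g : G ⧸ K) ≠ c := by
            intro h0
            apply hg
            have h2 : c * ((g : G) : G ⧸ K) = c * 1 := by rw [mul_one]; exact h0
            exact (QuotientGroup.eq_one_iff g).mp (mul_left_cancel h2)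
          rw [Pi.single_apply, if_neg h1, mul_zero]
      rw [Finset.sum_congr rfl fun c _ => hdiag c]
      by_cases hg : g ∈ K
      · simp only [if_pos hg]
      · simp only [if_neg hg, Finset.sum_const_zero]
    have hind : indChar K (fun k => (χ k : ℂ)) g
        = if g ∈ K then ∑ c : G ⧸ K, (χ (kap K g c) : ℂ) else 0 := by
      rw [indChar]
      by_cases hg : g ∈ K
      · rw [if_pos hg]
        have hterm : ∀ x : G, (if h : x⁻¹ * g * x ∈ K then ((χ ⟨x⁻¹ * g * x, h⟩ : ℂ)) else 0)
            = (χ (kap K g ((x⁻¹ : G) : G ⧸ K)) : ℂ) := by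
          intro x
          have hmem : x⁻¹ * g * x ∈ K := by
            have := hN.conj_mem g hg x⁻¹
            rwa [inv_inv] at this
          rw [dif_pos hmem]
          set c : G ⧸ K := ((x⁻¹ : G) : G ⧸ K) with hc
          have houtc : (c.out : G ⧸ K) = ((x⁻¹ : G) : G ⧸ K) := QuotientGroup.out_eq' c
          have hk : c.out⁻¹ * x⁻¹ ∈ K := QuotientGroup.eq.mp houtc
          have hsub : (⟨x⁻¹ * g * x, hmem⟩ : K) = kap K g c := by
            rw [kap_of_mem K g hg c]
            have h1 : conjK K x⁻¹ ⟨g, hg⟩ = ⟨x⁻¹ * g * x, hmem⟩ := by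
              ext; rw [conjK_coe, inv_inv]
            have h2 : c.out * ((⟨c.out⁻¹ * x⁻¹, hk⟩ : K) : G) = x⁻¹ := by
              simp [mul_inv_cancel_left]
            rw [← h1, ← h2, conjK_mul, conjK_mem K _ hab]
          rw [hsub]
        rw [Finset.sum_congr rfl fun x _ => hterm x]
        have hswap : ∑ x : G, (χ (kap K g ((x⁻¹ : G) : G ⧸ K)) : ℂ)
            = ∑ x : G, (χ (kap K g ((x : G) : G ⧸ K)) : ℂ) :=
          Fintype.sum_equiv (Equiv.inv G) _ _ fun x => rfl
        rw [hswap]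
        have hfiber : ∑ x : G, (χ (kap K g ((x : G) : G ⧸ K)) : ℂ)
            = ∑ c : G ⧸ K, (Nat.card K : ℂ) * (χ (kap K g c) : ℂ) := by
          rw [← Fintype.sum_fiberwise (fun x : G => ((x : G) : G ⧸ K))
            (fun x : G => (χ (kap K g ((x : G) : G ⧸ K)) : ℂ))]
          refine Finset.sum_congr rfl fun c _ => ?_
          have hconst : ∀ x : {x : G // ((x : G) : G ⧸ K) = c},
              (χ (kap K g ((x.1 : G) : G ⧸ K)) : ℂ) = (χ (kap K g c) : ℂ) := fun x => by
            rw [x.2]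
          have he : K ≃ {x : G // ((x : G) : G ⧸ K) = c} :=
            { toFun := fun k => ⟨c.out * k, by
                rw [QuotientGroup.mk_mul, QuotientGroup.out_eq',
                  (QuotientGroup.eq_one_iff (k : G)).mpr k.2, mul_one]⟩
              invFun := fun x => ⟨c.out⁻¹ * x, by
                have : (c.out : G ⧸ K) = ((x : G) : G ⧸ K) := by
                  rw [QuotientGroup.out_eq', x.2]
                exact QuotientGroup.eq.mp this⟩
              left_inv := fun k => by ext; simp
              right_inv := fun x => by ext; simp }
          have hcard2 : Fintype.card {x : G // ((x : G) : G ⧸ K) = c} = Nat.card K := by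
            rw [Nat.card_eq_fintype_card]
            exact (Fintype.card_congr he).symm
          rw [Finset.sum_congr rfl fun x _ => hconst x, Finset.sum_const, Finset.card_univ,
            nsmul_eq_mul, hcard2]
        rw [hfiber, ← Finset.mul_sum, ← mul_assoc, inv_mul_cancel₀, one_mul]
        simp [Nat.card_eq_fintype_card, Fintype.card_ne_zero]
      · rw [if_neg hg]
        have : ∀ x : G, (if h : x⁻¹ * g * x ∈ K then ((χ ⟨x⁻¹ * g * x, h⟩ : ℂ)) else 0) = 0 := by
          intro x
          rw [dif_neg]
          intro hmem
          apply hg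
          have : x * (x⁻¹ * g * x) * x⁻¹ ∈ K := hN.conj_mem _ hmem x
          convert this using 1
          group
        rw [Finset.sum_congr rfl fun x _ => this x, Finset.sum_const_zero, mul_zero]
    show LinearMap.trace ℂ _ ((FDRep.of (rho K χ)).ρ g) = _
    exact htrace.trans hind.symm
  · -- dimension
    show Module.finrank ℂ ((G ⧸ K) → ℂ) = K.index
    rw [Module.finrank_pi]
    rw [Subgroup.index, Nat.card_eq_fintype_card]
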